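/- On a symplectic manifold, ∂₊ and ∂₋ can be expressed in terms of d and d^Λ = dΛ - Λd as: ∂₊ = (H+2R+1)^{-1}[(H+R+1)d + L d^Λ] and ∂₋ = [(H+2R+1)(H+R)]^{-1}[Λd - (H+R)d^Λ]. -/

import Mathlib

open Finset

/-- **`∂₊` and `∂₋` in terms of `d` and `d^Λ`.**  `V` models the differential forms of a
symplectic manifold `(M^{2n}, ω)`: `Prj k` is the projection onto `k`-forms, `(L, Λ, H)`
the `sl(2)`-triple, `d` the exterior derivative (degree `+1`, commuting with `L`), and
`d^Λ = dΛ - Λd`.  `Dp = ∂₊`, `Dm = ∂₋` are the Lefschetz components of `d`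
(`d(L^r B) = L^r ∂₊B + L^{r+1} ∂₋B` with `∂₊B, ∂₋B` primitive), and `R` counts the
`L`-power.  Since `H + R` and `H + 2R + 1` are invertible on the relevant degrees, the
identities `∂₊ = (H+2R+1)⁻¹ [(H+R+1) d + L d^Λ]` and
`∂₋ = [(H+2R+1)(H+R)]⁻¹ [Λ d - (H+R) d^Λ]` are stated equivalently as
`(H+2R+1) ∂₊ = (H+R+1) d + L d^Λ` and `(H+2R+1)(H+R) ∂₋ = Λ d - (H+R) d^Λ`
on every `L^{r,s}`. -/
theorem dplus_dminus_via_d_and_dLambda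
    (n : ℕ) (V : Type*) [AddCommGroup V] [Module ℝ V]
    (Prj : ℤ → Module.End ℝ V)
    (hsum : ∑ k ∈ Finset.Icc (0 : ℤ) (2 * n), Prj k = 1)
    (horth : ∀ j k : ℤ, j ≠ k → Prj j * Prj k = 0)
    (hidem : ∀ k : ℤ, Prj k * Prj k = Prj k)
    (L Λ H : Module.End ℝ V)
    (hLdeg : ∀ k : ℤ, L * Prj k = Prj (k + 2) * L)
    (hΛdeg : ∀ k : ℤ, Λ * Prj k = Prj (k - 2) * Λ)
    (hH : H = ∑ k ∈ Finset.Icc (0 : ℤ) (2 * n), ((n : ℤ) - k) • Prj k)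
    (sl₁ : Λ * L - L * Λ = H)
    (sl₂ : H * Λ - Λ * H = (2 : ℤ) • Λ)
    (sl₃ : H * L - L * H = (-2 : ℤ) • L)
    (d : Module.End ℝ V)
    (hddeg : ∀ k : ℤ, d * Prj k = Prj (k + 1) * d)
    (hdL : d * L = L * d)
    (Dp Dm R : Module.End ℝ V)
    (hDpDm : ∀ (r s : ℕ), s ≤ n → ∀ B : V, Prj s B = B → Λ B = 0 →
      (Prj ((s : ℤ) + 1) (Dp B) = Dp B ∧ Λ (Dp B) = 0) ∧
      (Prj ((s : ℤ) - 1) (Dm B) = Dm B ∧ Λ (Dm B) = 0) ∧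
      Dp ((L ^ r) B) = (L ^ r) (Dp B) ∧
      Dm ((L ^ r) B) = (L ^ r) (Dm B) ∧
      d ((L ^ r) B) = (L ^ r) (Dp B) + (L ^ (r + 1)) (Dm B))
    (hR : ∀ (r s : ℕ), s ≤ n → ∀ B : V, Prj s B = B → Λ B = 0 →
      R ((L ^ r) B) = (r : ℤ) • (L ^ r) B)
    (dΛ : Module.End ℝ V)
    (hdΛ : dΛ = d * Λ - Λ * d) :
    ∀ (r s : ℕ), s ≤ n → ∀ B : V, Prj s B = B → Λ B = 0 →
      ((H + (2 : ℤ) • R + 1) * Dp) ((L ^ r) B)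
          = ((H + R + 1) * d + L * dΛ) ((L ^ r) B) ∧
      (((H + (2 : ℤ) • R + 1) * (H + R)) * Dm) ((L ^ r) B)
          = (Λ * d - (H + R) * dΛ) ((L ^ r) B) := by
  -- vectors supported outside [0, 2n] vanish
  have hout : ∀ (k : ℤ) (v : V), Prj k v = v → k ∉ Finset.Icc (0 : ℤ) (2 * (n : ℤ)) →
      v = 0 := by
    intro k v hv hk
    have h1 : v = (∑ j ∈ Finset.Icc (0 : ℤ) (2 * (n : ℤ)), Prj j) v := by
      rw [hsum]; rfl
    rw [LinearMap.sum_apply] at h1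
    have h2 : ∀ j ∈ Finset.Icc (0 : ℤ) (2 * (n : ℤ)), Prj j v = 0 := by
      intro j hj
      have hjk : j ≠ k := by rintro rfl; exact hk hj
      calc Prj j v = (Prj j * Prj k) v := by rw [Module.End.mul_apply, hv]
        _ = 0 := by rw [horth j k hjk]; rfl
    rw [Finset.sum_congr rfl h2] at h1
    simpa using h1
  -- H eigenvalue on graded pieces
  have hHeig : ∀ (k : ℤ) (v : V), Prj k v = v → H v = ((n : ℤ) - k) • v := by
    intro k v hv
    by_cases hk : k ∈ Finset.Icc (0 : ℤ) (2 * (n : ℤ))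
    · conv_lhs => rw [hH]
      rw [LinearMap.sum_apply, Finset.sum_eq_single k]
      · rw [LinearMap.smul_apply, hv]
      · intro j _ hjk
        have hz : Prj j v = 0 := by
          calc Prj j v = (Prj j * Prj k) v := by rw [Module.End.mul_apply, hv]
            _ = 0 := by rw [horth j k hjk]; rfl
        rw [LinearMap.smul_apply, hz, smul_zero]
      · intro h; exact absurd hk h
    · rw [hout k v hv hk]; simp
  -- grading of L powers
  have hPrjL : ∀ (k : ℤ) (v : V), Prj k v = v → Prj (k + 2) (L v) = L v := by
    intro k v hv
    have h1 : (L * Prj k) v = (Prj (k + 2) * L) v := by rw [hLdeg]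
    simpa [Module.End.mul_apply, hv] using h1.symm
  have hPrjLpow : ∀ (m : ℕ) (k : ℤ) (v : V), Prj k v = v →
      Prj (k + 2 * (m : ℤ)) ((L ^ m) v) = (L ^ m) v := by
    intro m
    induction m with
    | zero => intro k v hv; simpa using hv
    | succ m ih =>
      intro k v hv
      have h1 := hPrjL (k + 2 * (m : ℤ)) ((L ^ m) v) (ih k v hv)
      have h2 : (L ^ (m + 1)) v = L ((L ^ m) v) := by rw [pow_succ']; rfl
      have h3 : k + 2 * ((m : ℤ) + 1) = k + 2 * (m : ℤ) + 2 := by ring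
      rw [h2]
      push_cast
      rw [h3]
      exact h1
  -- H on L powers
  have hHL : ∀ (m : ℕ) (k : ℤ) (v : V), Prj k v = v →
      H ((L ^ m) v) = ((n : ℤ) - k - 2 * (m : ℤ)) • (L ^ m) v := by
    intro m k v hv
    have h1 := hHeig (k + 2 * (m : ℤ)) ((L ^ m) v) (hPrjLpow m k v hv)
    rw [h1]
    congr 1
    ring
  -- commutator identity applied
  have hΛLc : ∀ w : V, Λ (L w) = L (Λ w) + H w := by
    intro w
    have h := congrArg (fun f : Module.End ℝ V => f w) sl₁
    simp only [LinearMap.sub_apply, Module.End.mul_apply] at h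
    exact sub_eq_iff_eq_add'.mp h
  -- L pow successor
  have hpowsucc : ∀ (m : ℕ) (w : V), (L ^ (m + 1)) w = L ((L ^ m) w) := by
    intro m w; rw [pow_succ']; rfl
  -- Λ on L powers of primitive vectors
  have hLamL : ∀ (m : ℕ) (k : ℤ) (v : V), Prj k v = v → Λ v = 0 →
      Λ ((L ^ (m + 1)) v) = (((m : ℤ) + 1) * ((n : ℤ) - k - (m : ℤ))) • (L ^ m) v := by
    intro m
    induction m with
    | zero =>
      intro k v hv hΛv
      rw [hpowsucc 0 v, pow_zero, Module.End.one_apply] at *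
      rw [hΛLc v, hΛv, map_zero, zero_add, hHeig k v hv]
      push_cast
      congr 1; ring
    | succ m ih =>
      intro k v hv hΛv
      rw [hpowsucc (m + 1) v, hΛLc ((L ^ (m + 1)) v), ih k v hv hΛv,
        hHL (m + 1) k v hv, map_zsmul, ← hpowsucc m v]
      push_cast
      module
  -- primitive vectors of degree > n vanish
  have hvanish : ∀ (k : ℤ) (v : V), Prj k v = v → Λ v = 0 → (n : ℤ) < k → v = 0 := by
    intro k v hv hΛv hk
    have hstep : ∀ m : ℕ, (L ^ (m + 1)) v = 0 → (L ^ m) v = 0 := by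
      intro m h0
      have h1 := hLamL m k v hv hΛv
      rw [h0, map_zero] at h1
      have hc : (((((m : ℤ) + 1) * ((n : ℤ) - k - (m : ℤ))) : ℤ) : ℝ) ≠ 0 := by
        rw [Int.cast_ne_zero]
        apply mul_ne_zero <;> omega
      have h3 := h1.symm
      rw [← Int.cast_smul_eq_zsmul ℝ] at h3
      rcases smul_eq_zero.mp h3 with h | h
      · exact absurd h hc
      · exact h
    have htop : (L ^ (n + 1)) v = 0 := by
      apply hout (k + 2 * ((n + 1 : ℕ) : ℤ)) ((L ^ (n + 1)) v) (hPrjLpow (n + 1) k v hv)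
      simp only [Finset.mem_Icc, not_and]
      intro _
      push_cast
      omega
    have hdown : ∀ m : ℕ, (L ^ m) v = 0 → v = 0 := by
      intro m
      induction m with
      | zero => intro h; simpa using h
      | succ m ih => intro h; exact ih (hstep m h)
    exact hdown (n + 1) htop
  -- main part
  intro r s hs B hB hΛB
  obtain ⟨⟨hPdeg, hPΛ⟩, ⟨hQdeg, hQΛ⟩, -, -, -⟩ := hDpDm 0 s hs B hB hΛB
  set P := Dp B with hPdef
  set Q := Dm B with hQdef
  have hd' : ∀ m : ℕ, d ((L ^ m) B) = (L ^ m) P + (L ^ (m + 1)) Q :=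
    fun m => (hDpDm m s hs B hB hΛB).2.2.2.2
  have hDp' : ∀ m : ℕ, Dp ((L ^ m) B) = (L ^ m) P :=
    fun m => (hDpDm m s hs B hB hΛB).2.2.1
  have hDm' : ∀ m : ℕ, Dm ((L ^ m) B) = (L ^ m) Q :=
    fun m => (hDpDm m s hs B hB hΛB).2.2.2.1
  have hHP : ∀ m : ℕ, H ((L ^ m) P) = ((n : ℤ) - s - 1 - 2 * m) • (L ^ m) P := by
    intro m
    rw [hHL m ((s : ℤ) + 1) P hPdeg]
    congr 1; ring
  have hHQ : ∀ m : ℕ, H ((L ^ m) Q) = ((n : ℤ) - s + 1 - 2 * m) • (L ^ m) Q := by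
    intro m
    rw [hHL m ((s : ℤ) - 1) Q hQdeg]
    congr 1; ring
  have hRP : ∀ m : ℕ, R ((L ^ m) P) = (m : ℤ) • (L ^ m) P := by
    intro m
    rcases lt_or_ge s n with hlt | hge
    · have hc : ((s + 1 : ℕ) : ℤ) = (s : ℤ) + 1 := by push_cast; ring
      exact hR m (s + 1) (by omega) P (by rw [hc]; exact hPdeg) hPΛ
    · have hP0 : P = 0 := hvanish ((s : ℤ) + 1) P hPdeg hPΛ (by omega)
      simp [hP0]
  have hRQ : ∀ m : ℕ, R ((L ^ m) Q) = (m : ℤ) • (L ^ m) Q := by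
    intro m
    rcases Nat.eq_zero_or_pos s with rfl | hpos
    · have hQ0 : Q = 0 := by
        apply hout (((0 : ℕ) : ℤ) - 1) Q hQdeg
        simp only [Finset.mem_Icc, not_and]
        intro h
        omega
      simp [hQ0]
    · have hc : ((s - 1 : ℕ) : ℤ) = (s : ℤ) - 1 := by omega
      exact hR m (s - 1) (by omega) Q (by rw [hc]; exact hQdeg) hQΛ
  have hΛP : ∀ m : ℕ, Λ ((L ^ (m + 1)) P)
      = (((m : ℤ) + 1) * ((n : ℤ) - s - 1 - m)) • (L ^ m) P := by
    intro m
    rw [hLamL m ((s : ℤ) + 1) P hPdeg hPΛ]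
    congr 1; ring
  have hΛQ : ∀ m : ℕ, Λ ((L ^ (m + 1)) Q)
      = (((m : ℤ) + 1) * ((n : ℤ) - s + 1 - m)) • (L ^ m) Q := by
    intro m
    rw [hLamL m ((s : ℤ) - 1) Q hQdeg hQΛ]
    congr 1; ring
  have hΛB' : ∀ m : ℕ, Λ ((L ^ (m + 1)) B)
      = (((m : ℤ) + 1) * ((n : ℤ) - s - m)) • (L ^ m) B :=
    fun m => hLamL m (s : ℤ) B hB hΛB
  have hΛB0 : Λ ((L ^ 0) B) = 0 := by
    rw [pow_zero, Module.End.one_apply]; exact hΛB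
  have hΛP0 : Λ ((L ^ 0) P) = 0 := by
    rw [pow_zero, Module.End.one_apply]; exact hPΛ
  have hdΛ0 : dΛ ((L ^ 0) B) = (-((n : ℤ) - s + 1)) • (L ^ 0) Q := by
    rw [hdΛ, LinearMap.sub_apply, Module.End.mul_apply, Module.End.mul_apply,
      hΛB0, map_zero, hd' 0, map_add, hΛP0, hΛQ 0]
    push_cast
    module
  have hdΛs : ∀ m : ℕ, dΛ ((L ^ (m + 1)) B)
      = ((m : ℤ) + 1) • (L ^ m) P + (-((n : ℤ) - s - m)) • (L ^ (m + 1)) Q := by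
    intro m
    rw [hdΛ, LinearMap.sub_apply, Module.End.mul_apply, Module.End.mul_apply,
      hΛB' m, map_zsmul, hd' m, hd' (m + 1), map_add, hΛP m, hΛQ (m + 1)]
    push_cast
    module
  obtain rfl | ⟨m, rfl⟩ : r = 0 ∨ ∃ m, r = m + 1 := by
    rcases r with _ | m
    · exact Or.inl rfl
    · exact Or.inr ⟨m, rfl⟩
  · constructor
    · simp only [Module.End.mul_apply, LinearMap.add_apply, LinearMap.smul_apply,
        Module.End.one_apply, hDp' 0, hd' 0, hdΛ0, map_add, map_zsmul,
        hHP, hHQ, hRP, hRQ, ← hpowsucc]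
      push_cast
      module
    · simp only [Module.End.mul_apply, LinearMap.add_apply, LinearMap.smul_apply,
        Module.End.one_apply, LinearMap.sub_apply, hDm' 0, hd' 0, hdΛ0, map_add,
        map_zsmul, hHP, hHQ, hRP, hRQ, hΛP0, hΛQ, zero_add, ← hpowsucc]
      push_cast
      module
  · constructor
    · simp only [Module.End.mul_apply, LinearMap.add_apply, LinearMap.smul_apply,
        Module.End.one_apply, hDp' (m + 1), hd' (m + 1), hdΛs m, map_add, map_zsmul,
        hHP, hHQ, hRP, hRQ, ← hpowsucc]
      push_cast
      module
    · simp only [Module.End.mul_apply, LinearMap.add_apply, LinearMap.smul_apply,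
        Module.End.one_apply, LinearMap.sub_apply, hDm' (m + 1), hd' (m + 1), hdΛs m,
        map_add, map_zsmul, hHP, hHQ, hRP, hRQ, hΛP, hΛQ, ← hpowsucc]
      push_cast
      module
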